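/- arXiv:2408.14914 — 3 statements merged into one kernel-verified Lean document; each statement's English description precedes it below -/
import Mathlib

section
/- Let d ≥ 1 be an integer. For i ∈ {1,2} let g_i : (0,∞) × (0,∞) → [0,1] be functions such that (a) for each ν > 0 the map r ↦ g_i(r,ν) is nonincreasing, (b) for each r > 0 the map ν ↦ g_i(r,ν) is nonincreasing, and (c) lim_{r→∞} g_i(r,ν) = 0 for every ν > 0. Then there exists a function δ* : (0,∞) → (0,∞) with lim_{ε→0} δ*(ε)/ε = 0 and with the following property: for every function δ : (0,∞) → (0,∞) satisfying δ(ε) ≤ δ*(ε) for all ε sufficiently close to 0, one has lim_{ε→0} ε^{−d} g_i(ε/δ(ε), ν) = 0 for every ν > 0 and every i ∈ {1,2}. -/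
open Filter Topology Set

/-- **Existence of scales** (Proposition 1.2, abstract form).
Given two decay profiles `g i (r, ν) ∈ [0,1]`, nonincreasing in `r` and in `ν`, tending to `0`
as `r → ∞` for each fixed `ν > 0`, there is a scale `δ*` with `δ*(ε)/ε → 0` such that for every
scale `δ ≤ δ*` near `0`, one has `ε ^ (-d) * g i (ε / δ ε) ν → 0` as `ε → 0⁺`, for all `ν > 0`. -/
theorem existence_of_scales (d : ℕ) (hd : 1 ≤ d) (g : Fin 2 → ℝ → ℝ → ℝ)
    (hrange : ∀ i : Fin 2, ∀ r > (0 : ℝ), ∀ ν > (0 : ℝ), g i r ν ∈ Set.Icc (0 : ℝ) 1)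
    (hmono_r : ∀ i : Fin 2, ∀ ν > (0 : ℝ), ∀ r s : ℝ, 0 < r → r ≤ s → g i s ν ≤ g i r ν)
    (hmono_nu : ∀ i : Fin 2, ∀ r > (0 : ℝ), ∀ ν ν' : ℝ, 0 < ν → ν ≤ ν' → g i r ν' ≤ g i r ν)
    (hlim : ∀ i : Fin 2, ∀ ν > (0 : ℝ), Tendsto (fun r => g i r ν) atTop (𝓝 0)) :
    ∃ δstar : ℝ → ℝ, (∀ ε > (0 : ℝ), 0 < δstar ε) ∧
      Tendsto (fun ε => δstar ε / ε) (𝓝[>] (0 : ℝ)) (𝓝 0) ∧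
      ∀ δ : ℝ → ℝ, (∀ ε > (0 : ℝ), 0 < δ ε) →
        (∀ᶠ ε in 𝓝[>] (0 : ℝ), δ ε ≤ δstar ε) →
        ∀ ν > (0 : ℝ), ∀ i : Fin 2,
          Tendsto (fun ε => (ε ^ d)⁻¹ * g i (ε / δ ε) ν) (𝓝[>] (0 : ℝ)) (𝓝 0) := by
  -- choose scales R n
  have hR : ∀ n : ℕ, ∃ R : ℝ, (n : ℝ) ≤ R ∧ 1 ≤ R ∧
      ∀ i : Fin 2, ∀ m ∈ Finset.Icc 1 n, g i R (1 / (m : ℝ)) ≤ (((n : ℝ) + 1) ^ (d + 1))⁻¹ := by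
    intro n
    have hc : (0 : ℝ) < (((n : ℝ) + 1) ^ (d + 1))⁻¹ := by positivity
    have h3 : ∀ᶠ r in atTop, ∀ i : Fin 2, ∀ m ∈ Finset.Icc 1 n,
        g i r (1 / (m : ℝ)) ≤ (((n : ℝ) + 1) ^ (d + 1))⁻¹ := by
      rw [eventually_all]
      intro i
      rw [eventually_all_finset]
      intro m hm
      have hm1 : 1 ≤ m := (Finset.mem_Icc.1 hm).1
      have hmpos : (0 : ℝ) < 1 / (m : ℝ) := by
        have : (0:ℝ) < (m:ℝ) := by exact_mod_cast hm1
        positivity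
      exact (hlim i _ hmpos).eventually (eventually_le_nhds hc)
    exact (((eventually_ge_atTop ((n : ℝ))).and ((eventually_ge_atTop (1:ℝ)).and h3)).exists).imp
      (fun R h => ⟨h.1, h.2.1, h.2.2⟩)
  choose R hR1 hR2 hR3 using hR
  set N : ℝ → ℕ := fun ε => ⌈ε⁻¹⌉₊ with hN
  have hNtend : Tendsto N (𝓝[>] (0:ℝ)) atTop :=
    tendsto_nat_ceil_atTop.comp tendsto_inv_nhdsGT_zero
  refine ⟨fun ε => ε / R (N ε), ?_, ?_, ?_⟩
  · intro ε hε
    have := hR2 (N ε)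
    positivity
  · -- δ*/ε = (R (N ε))⁻¹ → 0
    have h1 : Tendsto (fun ε => (R (N ε))⁻¹) (𝓝[>] (0:ℝ)) (𝓝 0) := by
      apply tendsto_inv_atTop_zero.comp
      apply tendsto_atTop_mono (fun n => hR1 n) tendsto_natCast_atTop_atTop |>.comp hNtend
    refine h1.congr' ?_
    filter_upwards [self_mem_nhdsWithin] with ε (hε : 0 < ε)
    have hRpos : 0 < R (N ε) := lt_of_lt_of_le one_pos (hR2 _)
    field_simp
  · intro δ hδpos hδle ν hν i
    set m : ℕ := ⌈ν⁻¹⌉₊ with hm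
    have hm1 : 1 ≤ m := Nat.one_le_iff_ne_zero.2 (by
      simp [hm, Nat.ceil_eq_zero, not_le]
      positivity)
    have hmpos : (0:ℝ) < (m:ℝ) := by exact_mod_cast hm1
    have hinvm : 1 / (m:ℝ) ≤ ν := by
      rw [div_le_iff₀ hmpos]
      have : ν⁻¹ ≤ (m:ℝ) := Nat.le_ceil _
      calc (1:ℝ) = ν * ν⁻¹ := by field_simp
        _ ≤ ν * m := by nlinarith
    have hinvmpos : (0:ℝ) < 1 / (m:ℝ) := by positivity
    -- squeeze
    apply squeeze_zero'
    · filter_upwards [self_mem_nhdsWithin, hδle] with ε (hε : 0 < ε) hle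
      have hratio : 0 < ε / δ ε := div_pos hε (hδpos ε hε)
      have := (hrange i _ hratio ν hν).1
      positivity
    · filter_upwards [self_mem_nhdsWithin, hδle, hNtend.eventually (eventually_ge_atTop m),
        Ioo_mem_nhdsGT_of_mem (by norm_num : (0:ℝ) ∈ Ico (0:ℝ) 1)]
        with ε (hε : 0 < ε) hle hNm hε1
      set n := N ε with hn
      have hRpos : 0 < R n := lt_of_lt_of_le one_pos (hR2 _)
      have hδε : 0 < δ ε := hδpos ε hε
      -- ε / δ ε ≥ R n
      have hge : R n ≤ ε / δ ε := by
        have h1 : R n = ε / (ε / R n) := by field_simp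
        rw [h1]
        apply div_le_div_of_nonneg_left (le_of_lt hε) hδε hle
      have hratio : 0 < ε / δ ε := div_pos hε hδε
      have hchain1 : g i (ε / δ ε) ν ≤ g i (R n) ν := hmono_r i ν hν _ _ hRpos hge
      have hchain2 : g i (R n) ν ≤ g i (R n) (1 / (m:ℝ)) :=
        hmono_nu i (R n) hRpos _ _ hinvmpos hinvm
      have hmem : m ∈ Finset.Icc 1 n := Finset.mem_Icc.2 ⟨hm1, hNm⟩
      have hchain3 : g i (R n) (1 / (m:ℝ)) ≤ (((n:ℝ) + 1) ^ (d + 1))⁻¹ := hR3 n i m hmem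
      -- ε ≥ 1/n so (ε^d)⁻¹ ≤ n^d
      have hnpos : 0 < n := by
        have : 1 ≤ m := hm1
        omega
      have hnposR : (0:ℝ) < (n:ℝ) := by exact_mod_cast hnpos
      have hεn : ((n:ℝ))⁻¹ ≤ ε := by
        rw [inv_le_iff_one_le_mul₀ hnposR]
        have h1 : ε⁻¹ ≤ (n:ℝ) := Nat.le_ceil _
        calc (1:ℝ) = ε⁻¹ * ε := by field_simp
          _ ≤ ε * (n:ℝ) := by nlinarith
      have hεd : (ε ^ d)⁻¹ ≤ (n:ℝ) ^ d := by
        rw [inv_le_iff_one_le_mul₀ (by positivity)]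
        have : ((n:ℝ))⁻¹ ^ d ≤ ε ^ d := pow_le_pow_left₀ (by positivity) hεn d
        calc (1:ℝ) = ((n:ℝ)⁻¹ * n) ^ d := by field_simp; simp
          _ = (n:ℝ)⁻¹ ^ d * (n:ℝ) ^ d := by rw [mul_pow]
          _ ≤ ε ^ d * (n:ℝ) ^ d := mul_le_mul_of_nonneg_right this (by positivity)
          _ = (n:ℝ) ^ d * ε ^ d := mul_comm _ _
      have hgnn : 0 ≤ g i (ε / δ ε) ν := (hrange i _ hratio ν hν).1
      calc (ε ^ d)⁻¹ * g i (ε / δ ε) ν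
          ≤ (n:ℝ) ^ d * g i (ε / δ ε) ν := mul_le_mul_of_nonneg_right hεd hgnn
        _ ≤ (n:ℝ) ^ d * (((n:ℝ) + 1) ^ (d + 1))⁻¹ := by
            apply mul_le_mul_of_nonneg_left _ (by positivity)
            exact le_trans hchain1 (le_trans hchain2 hchain3)
        _ ≤ ((n:ℝ) + 1)⁻¹ := by
            rw [pow_succ, mul_inv]
            have h1 : (n:ℝ) ^ d ≤ ((n:ℝ) + 1) ^ d :=
              pow_le_pow_left₀ (by positivity) (by linarith) d
            have h2 : (n:ℝ) ^ d * (((n:ℝ) + 1) ^ d)⁻¹ ≤ 1 := by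
              rw [← div_eq_mul_inv, div_le_one (by positivity)]
              exact h1
            calc (n:ℝ) ^ d * ((((n:ℝ) + 1) ^ d)⁻¹ * ((n:ℝ) + 1)⁻¹)
                = ((n:ℝ) ^ d * (((n:ℝ) + 1) ^ d)⁻¹) * ((n:ℝ) + 1)⁻¹ := by ring
              _ ≤ 1 * ((n:ℝ) + 1)⁻¹ := mul_le_mul_of_nonneg_right h2 (by positivity)
              _ = ((n:ℝ) + 1)⁻¹ := one_mul _
    · -- bound tends to 0
      have hb : Tendsto (fun ε => ((N ε : ℝ) + 1)) (𝓝[>] (0:ℝ)) atTop :=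
        tendsto_atTop_add_const_right _ 1 (tendsto_natCast_atTop_atTop.comp hNtend)
      exact hb.inv_tendsto_atTop
end

section
/- Let 0 < λ ≤ Λ and 0 < θ_* ≤ θ^*, and let a, θ : ℝ → ℝ be Lebesgue measurable with λ ≤ a(y) ≤ Λ and θ_* ≤ θ(y) ≤ θ^* for almost every y ∈ ℝ. Assume that for every M ≥ 1 there exists x ∈ ℝ such that a(y) = λ and θ(y) = θ_* for almost every y ∈ [x, x + M). Then for every γ > 0, inf { ∫_ℝ ( ½ a(x/γ) u′(x)² + θ(x/γ) W(u(x)) ) dx : u ∈ C¹(ℝ), lim_{x→−∞} u(x) = −1, lim_{x→+∞} u(x) = +1 } = σ_W √(θ_* λ). -/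
open MeasureTheory Filter Topology
open scoped ENNReal

/-- Admissible one-dimensional phase transition profiles: `C¹` functions connecting `-1`
at `-∞` to `+1` at `+∞`. -/
def AdmissibleProfile (u : ℝ → ℝ) : Prop :=
  ContDiff ℝ 1 u ∧ Tendsto u atBot (𝓝 (-1)) ∧ Tendsto u atTop (𝓝 1)

/-- The homogeneous surface tension `σ_W`, with values in `[0, ∞]`. -/
noncomputable def sigmaW (W : ℝ → ℝ) : ℝ≥0∞ :=
  ⨅ (u : ℝ → ℝ) (_ : AdmissibleProfile u),
    ∫⁻ x : ℝ, ENNReal.ofReal ((deriv u x) ^ 2 / 2 + W (u x))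

namespace MinDevAux

lemma lintegral_comp_const_mul (g : ℝ → ℝ≥0∞) (hg : Measurable g) {c : ℝ} (hc : 0 < c) :
    ∫⁻ x : ℝ, g (c * x) = ENNReal.ofReal c⁻¹ * ∫⁻ x : ℝ, g x := by
  have hmap : Measure.map (c * ·) (volume : Measure ℝ) = ENNReal.ofReal |c⁻¹| • volume :=
    Real.map_volume_mul_left hc.ne'
  calc ∫⁻ x : ℝ, g (c * x) = ∫⁻ y, g y ∂(Measure.map (c * ·) volume) :=
        (lintegral_map hg (measurable_const_mul c)).symm
    _ = ENNReal.ofReal |c⁻¹| * ∫⁻ x, g x := by rw [hmap, lintegral_smul_measure, smul_eq_mul]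
    _ = _ := by rw [abs_of_pos (inv_pos.mpr hc)]

lemma qmp_div {γ : ℝ} (hγ : 0 < γ) :
    Measure.QuasiMeasurePreserving (fun x : ℝ => x / γ) volume volume := by
  have h : (fun x : ℝ => x / γ) = (γ⁻¹ * ·) := by
    funext x; rw [div_eq_inv_mul]
  rw [h]
  refine ⟨measurable_const_mul _, ?_⟩
  rw [Real.map_volume_mul_left (inv_ne_zero hγ.ne')]
  exact Measure.AbsolutelyContinuous.mk fun s hs h0 => by
    simp [Measure.smul_apply, h0]

lemma deriv_comp_const_mul' {u : ℝ → ℝ} (hu : ContDiff ℝ 1 u) (c x : ℝ) :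
    deriv (fun y => u (c * y)) x = c * deriv u (c * x) := by
  have h1 : HasDerivAt (fun y : ℝ => c * y) c x := by
    simpa using (hasDerivAt_id x).const_mul c
  have h2 : HasDerivAt u (deriv u (c * x)) (c * x) :=
    (hu.differentiable one_ne_zero (c * x)).hasDerivAt
  have h3 := h2.comp x h1
  have h4 : HasDerivAt (fun y => u (c * y)) (deriv u (c * x) * c) x := by
    simpa [Function.comp_def] using h3
  rw [h4.deriv, mul_comm]

lemma adm_comp {u : ℝ → ℝ} (hu : AdmissibleProfile u) {c : ℝ} (hc : 0 < c) :
    AdmissibleProfile (fun y => u (c * y)) := by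
  refine ⟨hu.1.comp (contDiff_const.mul contDiff_id), ?_, ?_⟩
  · exact hu.2.1.comp (Tendsto.const_mul_atBot hc tendsto_id)
  · exact hu.2.2.comp (Tendsto.const_mul_atTop hc tendsto_id)

lemma energy_comp_const_mul {W : ℝ → ℝ} (hWc : Continuous W) {u : ℝ → ℝ}
    (hu : ContDiff ℝ 1 u) {c : ℝ} (hc : 0 < c) (α β : ℝ) :
    ∫⁻ x : ℝ, ENNReal.ofReal (α * (deriv (fun y => u (c * y)) x) ^ 2 / 2 + β * W (u (c * x)))
      = ∫⁻ x : ℝ, ENNReal.ofReal ((α * c) * (deriv u x) ^ 2 / 2 + (β / c) * W (u x)) := by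
  have hd : Continuous (deriv u) := hu.continuous_deriv le_rfl
  set g : ℝ → ℝ≥0∞ :=
    fun y => ENNReal.ofReal (α * c ^ 2 * (deriv u y) ^ 2 / 2 + β * W (u y)) with hgdef
  have hgm : Measurable g := by
    apply ENNReal.measurable_ofReal.comp
    exact (((continuous_const.mul (hd.pow 2)).div_const 2).add
      (continuous_const.mul (hWc.comp hu.continuous))).measurable
  have h1 : ∀ x : ℝ,
      ENNReal.ofReal (α * (deriv (fun y => u (c * y)) x) ^ 2 / 2 + β * W (u (c * x)))
        = g (c * x) := by
    intro x
    rw [deriv_comp_const_mul' hu, hgdef]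
    dsimp only
    congr 1
    ring
  calc ∫⁻ x : ℝ, ENNReal.ofReal
        (α * (deriv (fun y => u (c * y)) x) ^ 2 / 2 + β * W (u (c * x)))
      = ∫⁻ x : ℝ, g (c * x) := lintegral_congr h1
    _ = ENNReal.ofReal c⁻¹ * ∫⁻ y, g y := lintegral_comp_const_mul g hgm hc
    _ = ∫⁻ y, ENNReal.ofReal c⁻¹ * g y :=
        (lintegral_const_mul' _ _ ENNReal.ofReal_ne_top).symm
    _ = _ := by
        refine lintegral_congr fun y => ?_
        rw [hgdef]
        dsimp only
        rw [← ENNReal.ofReal_mul (by positivity : (0:ℝ) ≤ c⁻¹)]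
        congr 1
        field_simp

lemma energy_sqrt {W : ℝ → ℝ} (hWc : Continuous W) {u : ℝ → ℝ}
    (hu : ContDiff ℝ 1 u) {α β : ℝ} (hα : 0 < α) (hβ : 0 < β) :
    ∫⁻ x : ℝ, ENNReal.ofReal (α * (deriv (fun y => u (Real.sqrt (β / α) * y)) x) ^ 2 / 2
        + β * W (u (Real.sqrt (β / α) * x)))
      = ENNReal.ofReal (Real.sqrt (α * β))
          * ∫⁻ x : ℝ, ENNReal.ofReal ((deriv u x) ^ 2 / 2 + W (u x)) := by
  set c : ℝ := Real.sqrt (β / α) with hcdef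
  have hc : 0 < c := Real.sqrt_pos.mpr (div_pos hβ hα)
  have hαc : α * c = Real.sqrt (α * β) := by
    rw [hcdef, show α * β = α ^ 2 * (β / α) by field_simp,
      Real.sqrt_mul (by positivity), Real.sqrt_sq hα.le]
  have hβc : β / c = Real.sqrt (α * β) := by
    rw [div_eq_iff hc.ne']
    rw [hcdef, ← Real.sqrt_mul (by positivity : (0:ℝ) ≤ α * β),
      show α * β * (β / α) = β ^ 2 by field_simp, Real.sqrt_sq hβ.le]
  rw [energy_comp_const_mul hWc hu hc α β, hαc, hβc,
    ← lintegral_const_mul' _ _ ENNReal.ofReal_ne_top]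
  refine lintegral_congr fun x => ?_
  rw [← ENNReal.ofReal_mul (Real.sqrt_nonneg _)]
  congr 1
  ring

lemma inf_energy {W : ℝ → ℝ} (hWc : Continuous W) {α β : ℝ} (hα : 0 < α) (hβ : 0 < β) :
    (⨅ (u : ℝ → ℝ) (_ : AdmissibleProfile u),
        ∫⁻ x : ℝ, ENNReal.ofReal (α * (deriv u x) ^ 2 / 2 + β * W (u x)))
      = ENNReal.ofReal (Real.sqrt (α * β)) * sigmaW W := by
  set c : ℝ := Real.sqrt (β / α) with hcdef
  have hc : 0 < c := Real.sqrt_pos.mpr (div_pos hβ hα)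
  have hs0 : ENNReal.ofReal (Real.sqrt (α * β)) ≠ 0 :=
    (ENNReal.ofReal_pos.mpr (Real.sqrt_pos.mpr (mul_pos hα hβ))).ne'
  have hstop : ENNReal.ofReal (Real.sqrt (α * β)) ≠ ∞ := ENNReal.ofReal_ne_top
  apply le_antisymm
  · rw [sigmaW, ENNReal.mul_iInf_of_ne hs0 hstop]
    refine le_iInf fun u => ?_
    rw [ENNReal.mul_iInf_of_ne hs0 hstop]
    refine le_iInf fun hu => ?_
    refine le_trans (iInf₂_le (fun y => u (c * y)) (adm_comp hu hc)) ?_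
    exact le_of_eq (energy_sqrt hWc hu.1 hα hβ)
  · refine le_iInf₂ fun u hu => ?_
    set v : ℝ → ℝ := fun y => u (c⁻¹ * y) with hvdef
    have hva : AdmissibleProfile v := adm_comp hu (inv_pos.mpr hc)
    have huv : (fun y => v (c * y)) = u := by
      funext y
      rw [hvdef]
      dsimp only
      rw [inv_mul_cancel_left₀ hc.ne']
    calc ENNReal.ofReal (Real.sqrt (α * β)) * sigmaW W
        ≤ ENNReal.ofReal (Real.sqrt (α * β))
            * ∫⁻ x : ℝ, ENNReal.ofReal ((deriv v x) ^ 2 / 2 + W (v x)) :=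
          mul_le_mul_right (iInf₂_le v hva) _
      _ = ∫⁻ x : ℝ, ENNReal.ofReal (α * (deriv (fun y => v (c * y)) x) ^ 2 / 2
            + β * W (v (c * x))) := (energy_sqrt hWc hva.1 hα hβ).symm
      _ = ∫⁻ x : ℝ, ENNReal.ofReal (α * (deriv u x) ^ 2 / 2 + β * W (u x)) := by
          refine lintegral_congr fun x => ?_
          have h2 : v (c * x) = u x := congrFun huv x
          rw [huv, h2]

lemma tail_small {f : ℝ → ℝ≥0∞} (hf : Measurable f) (hfin : ∫⁻ x, f x ≠ ∞)
    {ε : ℝ≥0∞} (hε : 0 < ε) (hεtop : ε ≠ ∞) :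
    ∃ n : ℕ, ∫⁻ x in (Set.Icc (-(n : ℝ)) (n : ℝ))ᶜ, f x < ε := by
  by_contra hcon
  push_neg at hcon
  have ht0 : ∫⁻ x, f x ≠ 0 := by
    intro h0
    have h1 : ε ≤ 0 := le_trans (hcon 0) (le_trans (setLIntegral_le_lintegral _ _) h0.le)
    exact hε.not_ge h1
  have key : ∀ n : ℕ, ∫⁻ x in Set.Icc (-(n : ℝ)) (n : ℝ), f x ≤ (∫⁻ x, f x) - ε := by
    intro n
    apply ENNReal.le_sub_of_add_le_right hεtop
    calc (∫⁻ x in Set.Icc (-(n : ℝ)) (n : ℝ), f x) + ε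
        ≤ (∫⁻ x in Set.Icc (-(n : ℝ)) (n : ℝ), f x)
            + ∫⁻ x in (Set.Icc (-(n : ℝ)) (n : ℝ))ᶜ, f x := add_le_add_right (hcon n) _
      _ = ∫⁻ x, f x := lintegral_add_compl f measurableSet_Icc
  have hsup : (⨆ n : ℕ, ∫⁻ x in Set.Icc (-(n : ℝ)) (n : ℝ), f x) = ∫⁻ x, f x := by
    have h1 : ∀ n : ℕ, ∫⁻ x in Set.Icc (-(n : ℝ)) (n : ℝ), f x
        = ∫⁻ x, (Set.Icc (-(n : ℝ)) (n : ℝ)).indicator f x :=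
      fun n => (lintegral_indicator measurableSet_Icc f).symm
    simp_rw [h1]
    rw [← lintegral_iSup (fun n => hf.indicator measurableSet_Icc) ?_]
    · refine lintegral_congr fun x => ?_
      apply le_antisymm (iSup_le fun n => Set.indicator_le_self _ _ _)
      have hx : x ∈ Set.Icc (-((⌈|x|⌉₊ : ℕ) : ℝ)) ((⌈|x|⌉₊ : ℕ) : ℝ) := by
        constructor
        · have := Nat.le_ceil |x|
          have := neg_abs_le x
          linarith
        · have := Nat.le_ceil |x|
          have := le_abs_self x
          linarith
      calc f x = (Set.Icc (-((⌈|x|⌉₊ : ℕ) : ℝ)) ((⌈|x|⌉₊ : ℕ) : ℝ)).indicator f x :=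
            (Set.indicator_of_mem hx f).symm
        _ ≤ ⨆ n : ℕ, (Set.Icc (-(n : ℝ)) (n : ℝ)).indicator f x :=
            le_iSup (fun n : ℕ => (Set.Icc (-(n : ℝ)) (n : ℝ)).indicator f x) _
    · intro m n hmn x
      exact Set.indicator_le_indicator_of_subset
        (Set.Icc_subset_Icc (neg_le_neg (Nat.cast_le.mpr hmn)) (Nat.cast_le.mpr hmn))
        (fun _ => zero_le) x
  have hle : ∫⁻ x, f x ≤ (∫⁻ x, f x) - ε := by
    calc ∫⁻ x, f x = ⨆ n : ℕ, ∫⁻ x in Set.Icc (-(n : ℝ)) (n : ℝ), f x := hsup.symm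
      _ ≤ (∫⁻ x, f x) - ε := iSup_le key
  exact absurd hle (ENNReal.sub_lt_self hfin ht0 hε.ne').not_ge

end MinDevAux

open MinDevAux in
/-- **Proposition 5.1 (minimization deviation), deterministic form.** If the one-dimensional
medium `(a, θ)` has, for every `M ≥ 1`, a stretch of length `M` where `a = λ` and `θ = θ_*`
(the minimal values), then for every `γ > 0` the surface tension of the medium at scale `γ`
equals `σ_W √(θ_* λ)`. -/
theorem minimization_deviation (W : ℝ → ℝ) (hWc : Continuous W) (hWnn : ∀ s, 0 ≤ W s)
    (hWzero : ∀ s, W s = 0 ↔ s = 1 ∨ s = -1)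
    (lam Lam thetaLow thetaHigh : ℝ)
    (hlam : 0 < lam) (hLam : lam ≤ Lam) (hth : 0 < thetaLow) (hTh : thetaLow ≤ thetaHigh)
    (a θ : ℝ → ℝ) (ha : Measurable a) (hθ : Measurable θ)
    (hab : ∀ᵐ y ∂(volume : Measure ℝ), lam ≤ a y ∧ a y ≤ Lam)
    (hθb : ∀ᵐ y ∂(volume : Measure ℝ), thetaLow ≤ θ y ∧ θ y ≤ thetaHigh)
    (hrare : ∀ M : ℝ, 1 ≤ M → ∃ x : ℝ,
      ∀ᵐ y ∂(volume : Measure ℝ), y ∈ Set.Ico x (x + M) → a y = lam ∧ θ y = thetaLow)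
    (γ : ℝ) (hγ : 0 < γ) :
    (⨅ (u : ℝ → ℝ) (_ : AdmissibleProfile u),
        ∫⁻ x : ℝ, ENNReal.ofReal (a (x / γ) * (deriv u x) ^ 2 / 2 + θ (x / γ) * W (u x)))
      = ENNReal.ofReal (Real.sqrt (thetaLow * lam)) * sigmaW W := by
  have qmp := qmp_div hγ
  have hcomm : Real.sqrt (thetaLow * lam) = Real.sqrt (lam * thetaLow) := by rw [mul_comm]
  have hsqrtpos : 0 < Real.sqrt (lam * thetaLow) := Real.sqrt_pos.mpr (mul_pos hlam hth)
  have hs0 : ENNReal.ofReal (Real.sqrt (lam * thetaLow)) ≠ 0 :=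
    (ENNReal.ofReal_pos.mpr hsqrtpos).ne'
  rw [hcomm]
  apply le_antisymm
  · -- upper bound
    by_cases hσ : sigmaW W = ∞
    · rw [hσ, ENNReal.mul_top hs0]
      exact le_top
    apply ENNReal.le_of_forall_pos_le_add
    intro ε hε _
    set S : ℝ≥0∞ := ENNReal.ofReal (Real.sqrt (lam * thetaLow)) with hSdef
    -- pick a near-optimal profile
    set δ : ℝ≥0∞ := (ε : ℝ≥0∞) / 2 / S with hδdef
    have hδ0 : δ ≠ 0 := by
      refine (ENNReal.div_pos ?_ ENNReal.ofReal_ne_top).ne'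
      exact (ENNReal.div_pos (by exact_mod_cast hε.ne') ENNReal.ofNat_ne_top).ne'
    obtain ⟨u, hu, huE⟩ : ∃ u : ℝ → ℝ, AdmissibleProfile u ∧
        (∫⁻ x : ℝ, ENNReal.ofReal ((deriv u x) ^ 2 / 2 + W (u x))) < sigmaW W + δ := by
      have h1 : sigmaW W < sigmaW W + δ := ENNReal.lt_add_right hσ hδ0
      conv_lhs at h1 => rw [sigmaW]
      rw [iInf_lt_iff] at h1
      obtain ⟨u, h1⟩ := h1
      rw [iInf_lt_iff] at h1
      obtain ⟨hu, h1⟩ := h1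
      exact ⟨u, hu, h1⟩
    set c : ℝ := Real.sqrt (thetaLow / lam) with hcdef
    have hc : 0 < c := Real.sqrt_pos.mpr (div_pos hth hlam)
    set w : ℝ → ℝ := fun y => u (c * y) with hwdef
    have hw : AdmissibleProfile w := adm_comp hu hc
    have hEw : ∫⁻ x : ℝ, ENNReal.ofReal (lam * (deriv w x) ^ 2 / 2 + thetaLow * W (w x))
        = S * ∫⁻ x : ℝ, ENNReal.ofReal ((deriv u x) ^ 2 / 2 + W (u x)) :=
      energy_sqrt hWc hu.1 hlam hth
    have hSδ : S * δ = (ε : ℝ≥0∞) / 2 := ENNReal.mul_div_cancel hs0 ENNReal.ofReal_ne_top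
    have hEw_le : ∫⁻ x : ℝ, ENNReal.ofReal (lam * (deriv w x) ^ 2 / 2 + thetaLow * W (w x))
        ≤ S * sigmaW W + (ε : ℝ≥0∞) / 2 := by
      rw [hEw, ← hSδ, ← mul_add]
      exact mul_le_mul_right huE.le _
    have hEwfin : (∫⁻ x : ℝ, ENNReal.ofReal (lam * (deriv w x) ^ 2 / 2 + thetaLow * W (w x))) ≠ ∞ := by
      refine ne_top_of_le_ne_top ?_ hEw_le
      exact ENNReal.add_ne_top.mpr ⟨ENNReal.mul_ne_top ENNReal.ofReal_ne_top hσ,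
        ne_top_of_le_ne_top ENNReal.coe_ne_top ENNReal.half_le_self⟩
    -- the dominating tail function
    set K : ℝ := max Lam thetaHigh with hKdef
    have hK : 0 < K := lt_of_lt_of_le hlam (le_trans hLam (le_max_left _ _))
    set G : ℝ → ℝ≥0∞ := fun y => ENNReal.ofReal (K * ((deriv w y) ^ 2 / 2 + W (w y))) with hGdef
    have hdw : Continuous (deriv w) := hw.1.continuous_deriv le_rfl
    have hGm : Measurable G := by
      apply ENNReal.measurable_ofReal.comp
      exact (continuous_const.mul (((hdw.pow 2).div_const 2).add
        (hWc.comp hw.1.continuous))).measurable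
    set m : ℝ := min lam thetaLow with hmdef
    have hm : 0 < m := lt_min hlam hth
    have hG_le : ∀ y : ℝ, G y ≤ ENNReal.ofReal (K / m)
        * ENNReal.ofReal (lam * (deriv w y) ^ 2 / 2 + thetaLow * W (w y)) := by
      intro y
      rw [← ENNReal.ofReal_mul (by positivity)]
      apply ENNReal.ofReal_le_ofReal
      have hA : (0:ℝ) ≤ (deriv w y) ^ 2 / 2 := by positivity
      have hB := hWnn (w y)
      have h1 : K ≤ K / m * lam := by
        rw [div_mul_eq_mul_div, le_div_iff₀ hm]
        exact mul_le_mul_of_nonneg_left (min_le_left _ _) hK.le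
      have h2 : K ≤ K / m * thetaLow := by
        rw [div_mul_eq_mul_div, le_div_iff₀ hm]
        exact mul_le_mul_of_nonneg_left (min_le_right _ _) hK.le
      calc K * ((deriv w y) ^ 2 / 2 + W (w y))
          = K * ((deriv w y) ^ 2 / 2) + K * W (w y) := by ring
        _ ≤ (K / m * lam) * ((deriv w y) ^ 2 / 2) + (K / m * thetaLow) * W (w y) :=
            add_le_add (mul_le_mul_of_nonneg_right h1 hA) (mul_le_mul_of_nonneg_right h2 hB)
        _ = K / m * (lam * (deriv w y) ^ 2 / 2 + thetaLow * W (w y)) := by ring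
    have hGfin : (∫⁻ y, G y) ≠ ∞ := by
      refine ne_top_of_le_ne_top
        (ENNReal.mul_ne_top (ENNReal.ofReal_ne_top (r := K / m)) hEwfin) ?_
      calc ∫⁻ y, G y ≤ ∫⁻ y, ENNReal.ofReal (K / m)
            * ENNReal.ofReal (lam * (deriv w y) ^ 2 / 2 + thetaLow * W (w y)) :=
          lintegral_mono hG_le
        _ = ENNReal.ofReal (K / m)
            * ∫⁻ y, ENNReal.ofReal (lam * (deriv w y) ^ 2 / 2 + thetaLow * W (w y)) :=
          lintegral_const_mul' _ _ ENNReal.ofReal_ne_top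
    -- tail cutoff
    obtain ⟨n, hn⟩ := tail_small hGm hGfin
      (ENNReal.div_pos (by exact_mod_cast hε.ne' : (ε : ℝ≥0∞) ≠ 0) ENNReal.ofNat_ne_top)
      (ne_top_of_le_ne_top ENNReal.coe_ne_top ENNReal.half_le_self)
    set R : ℝ := (n : ℝ) with hRdef
    have hR : 0 ≤ R := Nat.cast_nonneg n
    -- the rare stretch
    set M : ℝ := 2 * R / γ + 1 with hMdef
    have hM1 : 1 ≤ M := le_add_of_nonneg_left (by positivity)
    obtain ⟨x₀, hx₀⟩ := hrare M hM1
    set t : ℝ := γ * x₀ + R with htdef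
    set I : Set ℝ := Set.Icc (t - R) (t + R) with hIdef
    have hImeas : MeasurableSet I := measurableSet_Icc
    have hIsub : ∀ x ∈ I, x / γ ∈ Set.Ico x₀ (x₀ + M) := by
      intro x hx
      obtain ⟨h1, h2⟩ := hx
      constructor
      · rw [le_div_iff₀ hγ]
        calc x₀ * γ = t - R := by rw [htdef]; ring
          _ ≤ x := h1
      · rw [div_lt_iff₀ hγ]
        have hMγ : (x₀ + M) * γ = γ * x₀ + 2 * R + γ := by
          rw [hMdef]; field_simp; ring
        have h3 : x ≤ γ * x₀ + R + R := by rw [htdef] at h2; linarith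
        rw [hMγ]; linarith
    -- the competitor
    have hu₂ : AdmissibleProfile (fun x => w (x - t)) := by
      refine ⟨hw.1.comp (contDiff_id.sub contDiff_const), ?_, ?_⟩
      · refine hw.2.1.comp ?_
        simpa [sub_eq_add_neg] using tendsto_atBot_add_const_right atBot (-t) tendsto_id
      · refine hw.2.2.comp ?_
        simpa [sub_eq_add_neg] using tendsto_atTop_add_const_right atTop (-t) tendsto_id
    have hderiv2 : ∀ x : ℝ, deriv (fun x => w (x - t)) x = deriv w (x - t) :=
      fun x => deriv_comp_sub_const w t x
    refine le_trans (iInf₂_le (fun x => w (x - t)) hu₂) ?_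
    have hrewrite : ∫⁻ x : ℝ, ENNReal.ofReal (a (x / γ) * (deriv (fun x => w (x - t)) x) ^ 2 / 2
          + θ (x / γ) * W (w (x - t)))
        = ∫⁻ x : ℝ, ENNReal.ofReal (a (x / γ) * (deriv w (x - t)) ^ 2 / 2
          + θ (x / γ) * W (w (x - t))) :=
      lintegral_congr fun x => by rw [hderiv2 x]
    rw [hrewrite,
      ← lintegral_add_compl (fun x : ℝ => ENNReal.ofReal (a (x / γ) * (deriv w (x - t)) ^ 2 / 2
          + θ (x / γ) * W (w (x - t)))) hImeas]
    have hpart1 : ∫⁻ x in I, ENNReal.ofReal (a (x / γ) * (deriv w (x - t)) ^ 2 / 2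
          + θ (x / γ) * W (w (x - t)))
        ≤ S * sigmaW W + (ε : ℝ≥0∞) / 2 := by
      have he : ∫⁻ x in I, ENNReal.ofReal (a (x / γ) * (deriv w (x - t)) ^ 2 / 2
            + θ (x / γ) * W (w (x - t)))
          = ∫⁻ x in I, ENNReal.ofReal (lam * (deriv w (x - t)) ^ 2 / 2
            + thetaLow * W (w (x - t))) := by
        apply lintegral_congr_ae
        refine (ae_restrict_iff' hImeas).mpr ?_
        filter_upwards [qmp.ae hx₀] with x hx hxI
        obtain ⟨h1, h2⟩ := hx (hIsub x hxI)
        rw [h1, h2]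
      rw [he]
      refine le_trans (setLIntegral_le_lintegral _ _) ?_
      have htr : ∫⁻ x : ℝ, ENNReal.ofReal (lam * (deriv w (x - t)) ^ 2 / 2
            + thetaLow * W (w (x - t)))
          = ∫⁻ x : ℝ, ENNReal.ofReal (lam * (deriv w x) ^ 2 / 2 + thetaLow * W (w x)) :=
        lintegral_sub_right_eq_self
          (fun y => ENNReal.ofReal (lam * (deriv w y) ^ 2 / 2 + thetaLow * W (w y))) t
      rw [htr]
      exact hEw_le
    have hpart2 : ∫⁻ x in Iᶜ, ENNReal.ofReal (a (x / γ) * (deriv w (x - t)) ^ 2 / 2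
          + θ (x / γ) * W (w (x - t)))
        ≤ (ε : ℝ≥0∞) / 2 := by
      have hb : ∫⁻ x in Iᶜ, ENNReal.ofReal (a (x / γ) * (deriv w (x - t)) ^ 2 / 2
            + θ (x / γ) * W (w (x - t)))
          ≤ ∫⁻ x in Iᶜ, G (x - t) := by
        apply lintegral_mono_ae
        filter_upwards [ae_restrict_of_ae (qmp.ae hab), ae_restrict_of_ae (qmp.ae hθb)]
          with x h1 h2
        rw [hGdef]
        apply ENNReal.ofReal_le_ofReal
        have hA : (0:ℝ) ≤ (deriv w (x - t)) ^ 2 / 2 := by positivity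
        have hB := hWnn (w (x - t))
        have hKa : a (x / γ) ≤ K := le_trans h1.2 (le_max_left _ _)
        have hKθ : θ (x / γ) ≤ K := le_trans h2.2 (le_max_right _ _)
        calc a (x / γ) * (deriv w (x - t)) ^ 2 / 2 + θ (x / γ) * W (w (x - t))
            = a (x / γ) * ((deriv w (x - t)) ^ 2 / 2) + θ (x / γ) * W (w (x - t)) := by ring
          _ ≤ K * ((deriv w (x - t)) ^ 2 / 2) + K * W (w (x - t)) :=
            add_le_add (mul_le_mul_of_nonneg_right hKa hA) (mul_le_mul_of_nonneg_right hKθ hB)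
          _ = K * ((deriv w (x - t)) ^ 2 / 2 + W (w (x - t))) := by ring
      refine le_trans hb ?_
      have hmem : ∀ x : ℝ, x ∈ I ↔ x - t ∈ Set.Icc (-R) R := by
        intro x
        simp only [hIdef, Set.mem_Icc]
        constructor <;> (rintro ⟨h1, h2⟩; constructor <;> linarith)
      have hshift : ∫⁻ x in Iᶜ, G (x - t) = ∫⁻ y in (Set.Icc (-R) R)ᶜ, G y := by
        rw [← lintegral_indicator hImeas.compl, ← lintegral_indicator measurableSet_Icc.compl,
          ← lintegral_sub_right_eq_self (fun y => (Set.Icc (-R) R)ᶜ.indicator G y) t]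
        refine lintegral_congr fun x => ?_
        by_cases hx : x ∈ I
        · have h1 : x ∉ Iᶜ := fun h => h hx
          have h2 : x - t ∉ (Set.Icc (-R) R)ᶜ := fun h => h ((hmem x).1 hx)
          rw [Set.indicator_of_notMem h1, Set.indicator_of_notMem h2]
        · have h1 : x ∈ Iᶜ := hx
          have h2 : x - t ∈ (Set.Icc (-R) R)ᶜ := fun h => hx ((hmem x).2 h)
          rw [Set.indicator_of_mem h1, Set.indicator_of_mem h2]
      rw [hshift]
      exact hn.le
    calc (∫⁻ x in I, ENNReal.ofReal (a (x / γ) * (deriv w (x - t)) ^ 2 / 2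
            + θ (x / γ) * W (w (x - t))))
          + ∫⁻ x in Iᶜ, ENNReal.ofReal (a (x / γ) * (deriv w (x - t)) ^ 2 / 2
            + θ (x / γ) * W (w (x - t)))
        ≤ (S * sigmaW W + (ε : ℝ≥0∞) / 2) + (ε : ℝ≥0∞) / 2 := add_le_add hpart1 hpart2
      _ = S * sigmaW W + ε := by rw [add_assoc, ENNReal.add_halves]
  · -- lower bound
    rw [← inf_energy hWc hlam hth]
    refine le_iInf₂ fun u hu => ?_
    refine le_trans (iInf₂_le u hu) (lintegral_mono_ae ?_)
    filter_upwards [qmp.ae hab, qmp.ae hθb] with x h1 h2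
    apply ENNReal.ofReal_le_ofReal
    nlinarith [sq_nonneg (deriv u x), hWnn (u x), h1.1, h2.1]
end

section
/- Let d ≥ 1, r > 0, α ∈ (0, 1], C > 0, and let Q ⊆ ℝᵈ be a closed cube of side length r. For every ε > 0 there exists δ > 0 (depending only on ε, r, d, α, C, and W) such that the following holds: every continuous function u : Q → [−1, 1] satisfying |u(x) − u(y)| ≤ C |x − y|^α for all x, y ∈ Q and ∫_Q W(u(x)) dx < δ satisfies either sup_{x∈Q} |u(x) − 1| < ε or sup_{x∈Q} |u(x) + 1| < ε. -/
open MeasureTheory Set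

set_option maxHeartbeats 1000000 in
/-- **Lemma 3.7 (clearing-out property).** On a closed cube of side length `r`, a uniformly
`α`-Hölder continuous phase field with values in `[-1, 1]` and sufficiently small potential
energy `∫_Q W(u)` must be uniformly close to one of the two wells `±1`; the smallness
threshold `δ` depends only on `ε, r, d, α, C` and `W`. -/
theorem clearing_out (d : ℕ) (hd : 1 ≤ d) (r : ℝ) (hr : 0 < r)
    (α : ℝ) (hα0 : 0 < α) (hα1 : α ≤ 1) (C : ℝ) (hC : 0 < C)
    (W : ℝ → ℝ) (hWc : Continuous W) (hWnn : ∀ s, 0 ≤ W s)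
    (hWzero : ∀ s, W s = 0 ↔ s = 1 ∨ s = -1)
    (ε : ℝ) (hε : 0 < ε) :
    ∃ δ : ℝ, 0 < δ ∧
      ∀ z : Fin d → ℝ, ∀ u : (Fin d → ℝ) → ℝ,
        ContinuousOn u (Set.Icc z (fun i => z i + r)) →
        (∀ x ∈ Set.Icc z (fun i => z i + r), u x ∈ Set.Icc (-1 : ℝ) 1) →
        (∀ x ∈ Set.Icc z (fun i => z i + r), ∀ y ∈ Set.Icc z (fun i => z i + r),
          |u x - u y| ≤ C * Real.sqrt (∑ i, (x i - y i) ^ 2) ^ α) →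
        (∫ x in Set.Icc z (fun i => z i + r), W (u x)) < δ →
        (∀ x ∈ Set.Icc z (fun i => z i + r), |u x - 1| < ε) ∨
          (∀ x ∈ Set.Icc z (fun i => z i + r), |u x + 1| < ε) := by
  -- replace ε by e = min ε 1
  set e : ℝ := min ε 1 with he_def
  have he0 : 0 < e := lt_min hε one_pos
  have he1 : e ≤ 1 := min_le_right _ _
  have heε : e ≤ ε := min_le_left _ _
  -- the compact set away from the wells and the minimum of W on it
  set K : Set ℝ := Set.Icc (-1 + e / 4) (1 - e / 4) with hK_def
  have hKne : K.Nonempty := ⟨0, by constructor <;> nlinarith⟩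
  obtain ⟨s₀, hs₀K, hs₀min⟩ := isCompact_Icc.exists_isMinOn hKne hWc.continuousOn
  set m : ℝ := W s₀ with hm_def
  have hm0 : 0 < m := by
    rcases (hWnn s₀).lt_or_eq with h | h
    · exact h
    · exfalso
      rcases (hWzero s₀).1 h.symm with h1 | h1 <;>
        (rw [h1] at hs₀K; rcases hs₀K with ⟨hl, hu⟩; nlinarith)
  -- choose the size ρ of the small sub-box
  have hd0 : (0:ℝ) < Real.sqrt d := Real.sqrt_pos.2 (by exact_mod_cast Nat.lt_of_lt_of_le Nat.zero_lt_one hd)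
  set t : ℝ := (e / (4 * C)) ^ (1 / α : ℝ) with ht_def
  have ht0 : 0 < t := Real.rpow_pos_of_pos (by positivity) _
  set ρ : ℝ := min r (t / Real.sqrt d) with hρ_def
  have hρ0 : 0 < ρ := lt_min hr (div_pos ht0 hd0)
  have hρr : ρ ≤ r := min_le_left _ _
  refine ⟨m * ρ ^ d, by positivity, ?_⟩
  intro z u hu hrange hhold hint
  set Q : Set (Fin d → ℝ) := Set.Icc z (fun i => z i + r) with hQ_def
  by_contra hcon
  push_neg at hcon
  obtain ⟨⟨x, hx, hx1⟩, ⟨y, hy, hy1⟩⟩ := hcon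
  -- from the range hypothesis, u x ≤ 1 - e and u y ≥ -1 + e
  have hux : u x ≤ 1 - e := by
    have h := (hrange x hx).2
    have : e ≤ |u x - 1| := le_trans heε hx1
    rw [abs_of_nonpos (by linarith)] at this; linarith
  have huy : -1 + e ≤ u y := by
    have h := (hrange y hy).1
    have : e ≤ |u y + 1| := le_trans heε hy1
    rw [abs_of_nonneg (by linarith)] at this; linarith
  -- find a point p in Q with u p in the middle range
  have hQconn : IsPreconnected Q := (convex_Icc z _).isPreconnected
  obtain ⟨p, hp, hup⟩ : ∃ p ∈ Q, u p ∈ Set.Icc (-1 + e / 2) (1 - e / 2) := by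
    rcases le_or_gt (-1 + e / 2) (u x) with h | h
    · exact ⟨x, hx, ⟨h, by linarith⟩⟩
    · have hmem : (-1 + e / 2) ∈ Set.Icc (u x) (u y) := ⟨h.le, by linarith⟩
      obtain ⟨p, hpQ, hpv⟩ := hQconn.intermediate_value hx hy hu hmem
      exact ⟨p, hpQ, by rw [hpv]; constructor <;> nlinarith⟩
  -- the sub-box
  set a : Fin d → ℝ := fun i => max (z i) (min (p i) (z i + r - ρ)) with ha_def
  set B : Set (Fin d → ℝ) := Set.Icc a (fun i => a i + ρ) with hB_def
  have hpz : ∀ i, z i ≤ p i ∧ p i ≤ z i + r := fun i => ⟨hp.1 i, hp.2 i⟩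
  have ha_bounds : ∀ i, z i ≤ a i ∧ a i + ρ ≤ z i + r ∧ p i - ρ ≤ a i ∧ a i ≤ p i := by
    intro i
    obtain ⟨h1, h2⟩ := hpz i
    have hA : a i = max (z i) (min (p i) (z i + r - ρ)) := rfl
    refine ⟨le_max_left _ _, ?_, ?_, ?_⟩
    · have h3 : a i ≤ z i + r - ρ := by
        rw [hA]; exact max_le (by linarith) (min_le_right _ _)
      linarith
    · rw [hA]
      exact le_trans (le_min (by linarith) (by linarith)) (le_max_right _ _)
    · rw [hA]
      exact max_le h1 (min_le_left _ _)
  have hBQ : B ⊆ Q := by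
    intro q hq
    constructor <;> intro i
    · exact le_trans (ha_bounds i).1 (hq.1 i)
    · exact le_trans (hq.2 i) (ha_bounds i).2.1
  -- points of B are within ℓ² distance √d * ρ of p
  have hdist : ∀ q ∈ B, Real.sqrt (∑ i, (q i - p i) ^ 2) ≤ Real.sqrt d * ρ := by
    intro q hq
    have hsum : (∑ i, (q i - p i) ^ 2) ≤ (d : ℝ) * ρ ^ 2 := by
      calc (∑ i, (q i - p i) ^ 2) ≤ ∑ _i : Fin d, ρ ^ 2 := by
            apply Finset.sum_le_sum
            intro i _
            have h1 := (hq.1 i)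
            have h2 : q i ≤ a i + ρ := hq.2 i
            have hb := ha_bounds i
            have : |q i - p i| ≤ ρ := abs_le.2 ⟨by linarith [hb.2.2.1], by linarith [hb.2.2.2]⟩
            calc (q i - p i) ^ 2 = |q i - p i| ^ 2 := (sq_abs _).symm
              _ ≤ ρ ^ 2 := by nlinarith [abs_nonneg (q i - p i)]
        _ = (d : ℝ) * ρ ^ 2 := by simp [Finset.sum_const, mul_comm]
    calc Real.sqrt (∑ i, (q i - p i) ^ 2) ≤ Real.sqrt ((d : ℝ) * ρ ^ 2) := Real.sqrt_le_sqrt hsum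
      _ = Real.sqrt d * ρ := by
          rw [Real.sqrt_mul (Nat.cast_nonneg d), Real.sqrt_sq hρ0.le]
  -- on B, u stays in K, hence W(u) ≥ m
  have hCρ : C * (Real.sqrt d * ρ) ^ α ≤ e / 4 := by
    have h1 : Real.sqrt d * ρ ≤ t := by
      have : ρ ≤ t / Real.sqrt d := min_le_right _ _
      calc Real.sqrt d * ρ ≤ Real.sqrt d * (t / Real.sqrt d) := by
            exact mul_le_mul_of_nonneg_left this hd0.le
        _ = t := by field_simp
    have h2 : (Real.sqrt d * ρ) ^ α ≤ t ^ α :=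
      Real.rpow_le_rpow (by positivity) h1 hα0.le
    have h3 : t ^ α = e / (4 * C) := by
      rw [ht_def, ← Real.rpow_mul (by positivity), one_div, inv_mul_cancel₀ hα0.ne',
        Real.rpow_one]
    calc C * (Real.sqrt d * ρ) ^ α ≤ C * t ^ α := by
          exact mul_le_mul_of_nonneg_left h2 hC.le
      _ = e / 4 := by rw [h3]; field_simp
  have hWB : ∀ q ∈ B, m ≤ W (u q) := by
    intro q hq
    have hqQ : q ∈ Q := hBQ hq
    have hdq : |u q - u p| ≤ e / 4 := by
      have h1 := hhold q hqQ p hp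
      have h2 : C * Real.sqrt (∑ i, (q i - p i) ^ 2) ^ α ≤ C * (Real.sqrt d * ρ) ^ α := by
        apply mul_le_mul_of_nonneg_left _ hC.le
        exact Real.rpow_le_rpow (Real.sqrt_nonneg _) (hdist q hq) hα0.le
      linarith
    have : u q ∈ K := by
      rw [hK_def]
      rcases abs_le.1 hdq with ⟨hl, hu'⟩
      exact ⟨by linarith [hup.1], by linarith [hup.2]⟩
    exact hs₀min this
  -- integral comparison
  have hQmeas : MeasurableSet Q := measurableSet_Icc
  have hBmeas : MeasurableSet B := measurableSet_Icc
  have hintQ : IntegrableOn (fun x => W (u x)) Q := by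
    exact (hWc.comp_continuousOn hu).integrableOn_compact isCompact_Icc
  have hintB : IntegrableOn (fun x => W (u x)) B := hintQ.mono_set hBQ
  have hvolB : volume B = ENNReal.ofReal (ρ ^ d) := by
    rw [hB_def, Real.volume_Icc_pi]
    have : ∀ i : Fin d, ENNReal.ofReal ((a i + ρ) - a i) = ENNReal.ofReal ρ := by
      intro i; congr 1; ring
    rw [Finset.prod_congr rfl (fun i _ => this i), Finset.prod_const, Finset.card_univ,
      Fintype.card_fin, ← ENNReal.ofReal_pow hρ0.le]
  have hlow : m * ρ ^ d ≤ ∫ x in B, W (u x) := by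
    have h1 : ∫ _x in B, m ∂volume ≤ ∫ x in B, W (u x) := by
      apply setIntegral_mono_on _ hintB hBmeas hWB
      exact integrableOn_const (by rw [hvolB]; exact ENNReal.ofReal_ne_top)
    have h2 : ∫ _x in B, m ∂volume = m * ρ ^ d := by
      rw [setIntegral_const, Measure.real, hvolB, ENNReal.toReal_ofReal (by positivity), smul_eq_mul,
        mul_comm]
    linarith
  have hmono : ∫ x in B, W (u x) ≤ ∫ x in Q, W (u x) := by
    apply setIntegral_mono_set hintQ
    · exact Filter.Eventually.of_forall fun x => hWnn (u x)
    · exact HasSubset.Subset.eventuallyLE hBQ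
  linarith
end
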